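/- Let m ≥ 2 be an integer, α > 0 a real number, and set t̂ = arctan(√(α/(m−1))). Suppose γ is a real number with 0 < γ < 1 − 1/(m+α) such that γ·g_{m,α}'(t) ≤ H_{m,α}(t, γ·g_{m,α}(t)) for all t ∈ (0, t̂). Then there exists a differentiable function w : (0, t̂) → ℝ satisfying w'(t) = H_{m,α}(t, w(t)) and 0 < γ·g_{m,α}(t) ≤ w(t) ≤ g_{m,α}(t) for all t ∈ (0, t̂), with w(t) → 0 as t → 0⁺ and w(t) → +∞ as t → t̂⁻. -/

import Mathlib

open Set Filter Real Topology MeasureTheory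


/-- The right-hand side `H_{m,α}(t,w)` of the first-order ODE for `w = v̇`. -/
noncomputable def Hrhs (m : ℕ) (α : ℝ) (t w : ℝ) : ℝ :=
  (1 + w ^ 2) *
    ((m : ℝ) + α +
      (((m : ℝ) - α - 1 - ((m : ℝ) + α - 1) * Real.cos (2 * t)) / Real.sin (2 * t)) * w)

/-- The explicit upper solution `g_{m,α}(t)`. -/
noncomputable def gUpper (m : ℕ) (α : ℝ) (t : ℝ) : ℝ :=
  ((m : ℝ) + α) * Real.sin (2 * t) /
    (((m : ℝ) + α - 1) * Real.cos (2 * t) - ((m : ℝ) - α - 1))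

/-- The cone angle `t̂ = arctan √(α/(m−1))`. -/
noncomputable def tHat (m : ℕ) (α : ℝ) : ℝ :=
  Real.arctan (Real.sqrt (α / ((m : ℝ) - 1)))

/-- Denominator of `gUpper`. -/
noncomputable def Dfun (m : ℕ) (α : ℝ) (t : ℝ) : ℝ :=
  ((m : ℝ) + α - 1) * Real.cos (2 * t) - ((m : ℝ) - α - 1)

section Basics

variable {m : ℕ} {α : ℝ} (hm : 2 ≤ m) (hα : 0 < α)
include hm hα

lemma m1_pos : (0:ℝ) < (m:ℝ) - 1 := by
  have : (2:ℝ) ≤ (m:ℝ) := by exact_mod_cast hm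
  linarith

lemma tHat_pos : 0 < tHat m α := by
  have h1 : (0:ℝ) < α / ((m:ℝ) - 1) := div_pos hα (m1_pos hm hα)
  have h2 : Real.sqrt (α / ((m:ℝ)-1)) > 0 := Real.sqrt_pos.2 h1
  have := Real.arctan_strictMono h2
  rwa [Real.arctan_zero] at this

lemma tHat_lt : tHat m α < π / 2 := Real.arctan_lt_pi_div_two _

lemma sin_2t_pos {t : ℝ} (ht : t ∈ Ioo 0 (tHat m α)) : 0 < Real.sin (2 * t) := by
  apply Real.sin_pos_of_pos_of_lt_pi (by linarith [ht.1])
  have := ht.2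
  have h2 := tHat_lt (m := m) (α := α) hm hα
  have hpi : π / 2 * 2 = π := by ring
  nlinarith [Real.pi_pos]

lemma tan_sq_lt {t : ℝ} (ht : t ∈ Ioo 0 (tHat m α)) :
    Real.tan t ^ 2 < α / ((m:ℝ) - 1) := by
  have h2 := tHat_lt (m := m) (α := α) hm hα
  have htan : Real.tan t < Real.tan (tHat m α) := by
    apply Real.tan_lt_tan_of_nonneg_of_lt_pi_div_two (le_of_lt ht.1) h2 ht.2
  have htanHat : Real.tan (tHat m α) = Real.sqrt (α / ((m:ℝ) - 1)) := Real.tan_arctan _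
  have htan0 : 0 ≤ Real.tan t := by
    exact Real.tan_nonneg_of_nonneg_of_le_pi_div_two (le_of_lt ht.1) (by linarith [ht.2, h2])
  have hs : Real.sqrt (α / ((m:ℝ) - 1)) ^ 2 = α / ((m:ℝ) - 1) :=
    Real.sq_sqrt (le_of_lt (div_pos hα (m1_pos hm hα)))
  calc Real.tan t ^ 2 < Real.tan (tHat m α) ^ 2 := by
        rw [htanHat] at htan ⊢; nlinarith
    _ = α / ((m:ℝ) - 1) := by rw [htanHat, hs]

lemma cos_t_pos {t : ℝ} (ht : t ∈ Ioo 0 (tHat m α)) : 0 < Real.cos t := by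
  apply Real.cos_pos_of_mem_Ioo
  constructor
  · linarith [ht.1, Real.pi_pos]
  · linarith [ht.2, tHat_lt (m := m) (α := α) hm hα]

lemma Dfun_pos {t : ℝ} (ht : t ∈ Ioo 0 (tHat m α)) : 0 < Dfun m α t := by
  have hc := cos_t_pos hm hα ht
  have htan := tan_sq_lt hm hα ht
  have hm1 := m1_pos hm hα
  have hcos2 : Real.cos (2 * t) = 2 * Real.cos t ^ 2 - 1 := Real.cos_two_mul t
  have hsc : Real.sin t ^ 2 + Real.cos t ^ 2 = 1 := Real.sin_sq_add_cos_sq t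
  have htaneq : Real.tan t = Real.sin t / Real.cos t := Real.tan_eq_sin_div_cos t
  -- tan² t < α/(m-1)  →  (m-1) sin² t < α cos² t
  have hkey : ((m:ℝ) - 1) * Real.sin t ^ 2 < α * Real.cos t ^ 2 := by
    rw [htaneq] at htan
    have h1 : (Real.sin t / Real.cos t) ^ 2 = Real.sin t ^ 2 / Real.cos t ^ 2 := by
      rw [div_pow]
    rw [h1, div_lt_div_iff₀ (by positivity) hm1] at htan
    nlinarith
  unfold Dfun
  rw [hcos2]
  nlinarith

lemma gUpper_pos {t : ℝ} (ht : t ∈ Ioo 0 (tHat m α)) : 0 < gUpper m α t := by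
  unfold gUpper
  have := sin_2t_pos hm hα ht
  have hD := Dfun_pos hm hα ht
  unfold Dfun at hD
  have hma : (0:ℝ) < (m:ℝ) + α := by have := m1_pos hm hα; linarith
  positivity

lemma hasDerivAt_gUpper {t : ℝ} (ht : t ∈ Ioo 0 (tHat m α)) :
    HasDerivAt (gUpper m α)
      (2 * ((m:ℝ) + α) * (((m:ℝ) + α - 1) - ((m:ℝ) - α - 1) * Real.cos (2 * t))
        / (Dfun m α t) ^ 2) t := by
  have hD := Dfun_pos hm hα ht
  have hsin : HasDerivAt (fun t : ℝ => Real.sin (2 * t)) (Real.cos (2 * t) * 2) t := by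
    simpa [Function.comp_def] using (Real.hasDerivAt_sin (2*t)).comp t ((hasDerivAt_id t).const_mul 2)
  have hcosd : HasDerivAt (fun t : ℝ => Real.cos (2 * t)) (-Real.sin (2 * t) * 2) t := by
    simpa [Function.comp_def] using (Real.hasDerivAt_cos (2*t)).comp t ((hasDerivAt_id t).const_mul 2)
  have hN : HasDerivAt (fun t => ((m : ℝ) + α) * Real.sin (2 * t))
      (((m:ℝ) + α) * (Real.cos (2 * t) * 2)) t := hsin.const_mul _
  have hDd : HasDerivAt (fun t => ((m : ℝ) + α - 1) * Real.cos (2 * t) - ((m : ℝ) - α - 1))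
      (((m:ℝ) + α - 1) * (-Real.sin (2 * t) * 2)) t := by
    exact (hcosd.const_mul _).sub_const _
  have := hN.div hDd (ne_of_gt hD)
  refine HasDerivAt.congr_deriv this ?_
  symm
  have hsc : Real.sin (2*t) ^ 2 + Real.cos (2*t) ^ 2 = 1 := Real.sin_sq_add_cos_sq _
  unfold Dfun
  congr 1
  linear_combination (-2*((m:ℝ)+α)*((m:ℝ)+α-1)) * hsc

lemma deriv_gUpper_nonneg {t : ℝ} (ht : t ∈ Ioo 0 (tHat m α)) :
    0 ≤ deriv (gUpper m α) t := by
  rw [(hasDerivAt_gUpper hm hα ht).deriv]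
  have hc1 : Real.cos (2*t) ≤ 1 := Real.cos_le_one _
  have hc2 : -1 ≤ Real.cos (2*t) := Real.neg_one_le_cos _
  have hm1 := m1_pos hm hα
  have hnum : 0 ≤ ((m:ℝ) + α - 1) - ((m:ℝ) - α - 1) * Real.cos (2 * t) := by nlinarith
  positivity

lemma Hrhs_g_eq_zero {t : ℝ} (ht : t ∈ Ioo 0 (tHat m α)) :
    Hrhs m α t (gUpper m α t) = 0 := by
  have hS := sin_2t_pos hm hα ht
  have hD := Dfun_pos hm hα ht
  unfold Hrhs gUpper Dfun at *
  rw [mul_eq_zero]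
  right
  field_simp
  ring

end Basics

/-! ### Clamp function -/

noncomputable def clampTo (M x : ℝ) : ℝ := max (-M) (min x M)

lemma clampTo_mem {M x : ℝ} (hM : 0 ≤ M) : clampTo M x ∈ Icc (-M) M := by
  constructor
  · exact le_max_left _ _
  · exact max_le (by linarith) (min_le_right _ _)

lemma clampTo_eq {M x : ℝ} (h : x ∈ Icc (-M) M) : clampTo M x = x := by
  unfold clampTo
  rw [min_eq_left h.2, max_eq_right h.1]

lemma clampTo_diff (M x y : ℝ) : |clampTo M x - clampTo M y| ≤ |x - y| := by
  unfold clampTo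
  rw [max_comm (-M) (min x M), max_comm (-M) (min y M)]
  refine (abs_max_sub_max_le_abs _ _ _).trans ?_
  refine (abs_min_sub_min_le_max x M y M).trans ?_
  simp [abs_nonneg]

/-! ### The comparison lemma -/

lemma ode_comparison {a b L : ℝ} {u v u' v' : ℝ → ℝ}
    (hab : a ≤ b)
    (hu : ContinuousOn u (Icc a b)) (hv : ContinuousOn v (Icc a b))
    (hud : ∀ t ∈ Ioo a b, HasDerivAt u (u' t) t)
    (hvd : ∀ t ∈ Ioo a b, HasDerivAt v (v' t) t)
    (hkey : ∀ t ∈ Ioo a b, v t ≤ u t → u' t ≤ v' t + L * (u t - v t))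
    (hinit : u a ≤ v a) : ∀ t ∈ Icc a b, u t ≤ v t := by
  by_contra hcon
  push_neg at hcon
  obtain ⟨c, hc, hvc⟩ := hcon
  set h : ℝ → ℝ := fun t => (u t - v t) * Real.exp (-L * t) with hh
  have hhc : ∀ s ⊆ Icc a b, ContinuousOn h s := fun s hs =>
    (((hu.mono hs).sub (hv.mono hs)).mul (Real.continuous_exp.comp
      (continuous_const.mul continuous_id)).continuousOn)
  have hhapos : h c > 0 := by
    apply mul_pos (by linarith) (Real.exp_pos _)
  have hha : h a ≤ 0 := by
    apply mul_nonpos_of_nonpos_of_nonneg (by linarith) (le_of_lt (Real.exp_pos _))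
  have hac : a < c := by
    rcases eq_or_lt_of_le hc.1 with h1 | h1
    · exfalso; rw [← h1] at hhapos; linarith
    · exact h1
  set A : Set ℝ := Icc a c ∩ h ⁻¹' (Iic 0) with hA
  have haA : a ∈ A := ⟨⟨le_refl a, le_of_lt hac⟩, by simpa [mem_preimage] using hha⟩
  have hAne : A.Nonempty := ⟨a, haA⟩
  have hAbdd : BddAbove A := ⟨c, fun x hx => hx.1.2⟩
  have hAclosed : IsClosed A :=
    ContinuousOn.preimage_isClosed_of_isClosed
      (hhc _ (Icc_subset_Icc le_rfl hc.2)) isClosed_Icc isClosed_Iic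
  have hb₀A : sSup A ∈ A := hAclosed.csSup_mem hAne hAbdd
  have hb₀le : h (sSup A) ≤ 0 := hb₀A.2
  have hb₀a : a ≤ sSup A := hb₀A.1.1
  have hb₀c : sSup A ≤ c := hb₀A.1.2
  have hb₀lt : sSup A < c := lt_of_le_of_ne hb₀c (by rintro hh'; rw [hh'] at hb₀le; linarith)
  have hpos : ∀ t ∈ Ioc (sSup A) c, 0 < h t := by
    intro t ht
    by_contra hle
    push_neg at hle
    have : t ∈ A := ⟨⟨le_trans hb₀a (le_of_lt ht.1), ht.2⟩, by simpa [mem_preimage] using hle⟩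
    exact absurd (le_csSup hAbdd this) (not_le.2 ht.1)
  have hder : ∀ t ∈ Ioo (sSup A) c, HasDerivAt h ((u' t - v' t) * Real.exp (-L * t)
      + (u t - v t) * (Real.exp (-L * t) * (-L))) t := by
    intro t ht
    have htio : t ∈ Ioo a b := ⟨lt_of_le_of_lt hb₀a ht.1, lt_of_lt_of_le ht.2 hc.2⟩
    have hlin : HasDerivAt (fun s : ℝ => -L * s) (-L) t := by
      simpa using (hasDerivAt_id t).const_mul (-L)
    exact ((hud t htio).sub (hvd t htio)).mul hlin.exp
  have hanti : AntitoneOn h (Icc (sSup A) c) := by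
    apply antitoneOn_of_deriv_nonpos (convex_Icc _ _)
    · exact hhc _ (Icc_subset_Icc hb₀a hc.2)
    · rw [interior_Icc]
      exact fun t ht => (hder t ht).differentiableAt.differentiableWithinAt
    · rw [interior_Icc]
      intro t ht
      have htio : t ∈ Ioo a b := ⟨lt_of_le_of_lt hb₀a ht.1, lt_of_lt_of_le ht.2 hc.2⟩
      rw [(hder t ht).deriv]
      have hht : 0 < h t := hpos t ⟨ht.1, le_of_lt ht.2⟩
      have huv : v t ≤ u t := by
        by_contra hlt
        push_neg at hlt
        have : h t ≤ 0 := mul_nonpos_of_nonpos_of_nonneg (by linarith) (Real.exp_pos _).le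
        linarith
      have hk := hkey t htio huv
      have hexp_pos := Real.exp_pos (-L * t)
      nlinarith
  have := hanti ⟨le_refl _, le_of_lt hb₀lt⟩ ⟨le_of_lt hb₀lt, le_refl c⟩ (le_of_lt hb₀lt)
  linarith

/-! ### Lipschitz and bound estimates for `Hrhs` -/

/-- The coefficient function in `Hrhs`. -/
noncomputable def Efun (m : ℕ) (α : ℝ) (t : ℝ) : ℝ :=
  ((m : ℝ) - α - 1 - ((m : ℝ) + α - 1) * Real.cos (2 * t)) / Real.sin (2 * t)

lemma Hrhs_eq (m : ℕ) (α : ℝ) (t w : ℝ) :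
    Hrhs m α t w = (1 + w ^ 2) * (((m : ℝ) + α) + Efun m α t * w) := rfl

section Est

variable {m : ℕ} {α : ℝ} (hm : 2 ≤ m) (hα : 0 < α)
include hm hα

lemma Icc_subset_J {a b : ℝ} (ha : 0 < a) (hb : b < tHat m α) :
    Icc a b ⊆ Ioo 0 (tHat m α) :=
  fun t ht => ⟨lt_of_lt_of_le ha ht.1, lt_of_le_of_lt ht.2 hb⟩

lemma contOn_Efun {s : Set ℝ} (hs : s ⊆ Ioo 0 (tHat m α)) :
    ContinuousOn (Efun m α) s := by
  apply ContinuousOn.div (by fun_prop) (by fun_prop)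
  exact fun t ht => ne_of_gt (sin_2t_pos hm hα (hs ht))

lemma contOn_gUpper {s : Set ℝ} (hs : s ⊆ Ioo 0 (tHat m α)) :
    ContinuousOn (gUpper m α) s := by
  apply ContinuousOn.div (by fun_prop) (by fun_prop)
  intro t ht
  have := Dfun_pos hm hα (hs ht)
  unfold Dfun at this
  exact ne_of_gt this

lemma contOn_Hrhs_comp {s : Set ℝ} (hs : s ⊆ Ioo 0 (tHat m α)) {f : ℝ → ℝ}
    (hf : ContinuousOn f s) :
    ContinuousOn (fun t => Hrhs m α t (f t)) s := by
  simp only [Hrhs_eq]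
  exact (continuousOn_const.add (hf.pow 2)).mul
    (continuousOn_const.add ((contOn_Efun hm hα hs).mul hf))

lemma exists_K {a b : ℝ} (ha : 0 < a) (hb : b < tHat m α) :
    ∃ K : ℝ, 0 ≤ K ∧ ∀ t ∈ Icc a b, |Efun m α t| ≤ K := by
  obtain ⟨K, hK⟩ := IsCompact.exists_bound_of_continuousOn isCompact_Icc
    (contOn_Efun hm hα (Icc_subset_J hm hα ha hb))
  rcases le_or_gt a b with hab | hab
  · refine ⟨K, le_trans (abs_nonneg _) (hK a ⟨le_refl a, hab⟩), fun t ht => hK t ht⟩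
  · exact ⟨0, le_refl 0, fun t ht => absurd (le_trans ht.1 ht.2) (not_le.2 hab)⟩

lemma ma_pos : (0:ℝ) < (m:ℝ) + α := by
  have := m1_pos hm hα; linarith

lemma Hrhs_lip {K M t x y : ℝ} (hK : |Efun m α t| ≤ K) (hx : |x| ≤ M) (hy : |y| ≤ M) :
    |Hrhs m α t x - Hrhs m α t y| ≤
      (((m:ℝ) + α) * (2 * M) + K * (1 + 3 * M ^ 2)) * |x - y| := by
  have hsub : Hrhs m α t x - Hrhs m α t y
      = (((m:ℝ) + α) * (x + y) + Efun m α t * (1 + x^2 + x*y + y^2)) * (x - y) := by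
    simp only [Hrhs_eq]; ring
  rw [hsub, abs_mul]
  apply mul_le_mul_of_nonneg_right _ (abs_nonneg _)
  have hM0 : 0 ≤ M := le_trans (abs_nonneg _) hx
  have hx' := abs_le.1 hx
  have hy' := abs_le.1 hy
  have hma := ma_pos hm hα
  have hE := abs_le.1 hK
  have hK0 : 0 ≤ K := le_trans (abs_nonneg _) hK
  refine (abs_add_le _ _).trans ?_
  have h1 : |((m:ℝ) + α) * (x + y)| ≤ ((m:ℝ) + α) * (2 * M) := by
    rw [abs_mul, abs_of_pos hma]
    apply mul_le_mul_of_nonneg_left _ (le_of_lt hma)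
    rw [abs_le]; constructor <;> nlinarith
  have h2 : |Efun m α t * (1 + x^2 + x*y + y^2)| ≤ K * (1 + 3 * M ^ 2) := by
    rw [abs_mul]
    apply mul_le_mul hK _ (abs_nonneg _) hK0
    rw [abs_le]; constructor <;> nlinarith [sq_nonneg (x+y), sq_nonneg (x-y)]
  linarith

lemma Hrhs_bound {K M t x : ℝ} (hK : |Efun m α t| ≤ K) (hx : |x| ≤ M) :
    |Hrhs m α t x| ≤ (1 + M ^ 2) * (((m:ℝ) + α) + K * M) := by
  have hM0 : 0 ≤ M := le_trans (abs_nonneg _) hx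
  have hx' := abs_le.1 hx
  have hma := ma_pos hm hα
  have hE := abs_le.1 hK
  have hK0 : 0 ≤ K := le_trans (abs_nonneg _) hK
  rw [Hrhs_eq, abs_mul]
  apply mul_le_mul
  · rw [abs_le]; constructor <;> nlinarith
  · rw [abs_le]; constructor <;> nlinarith
  · exact abs_nonneg _
  · nlinarith

end Est

/-! ### Existence of a squeezed solution on a compact subinterval -/

lemma exists_solution_on {m : ℕ} {α : ℝ} (hm : 2 ≤ m) (hα : 0 < α) {γ : ℝ}
    (hγ0 : 0 < γ) (hγ1 : γ ≤ 1)
    (hlow : ∀ t ∈ Set.Ioo 0 (tHat m α),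
      γ * deriv (gUpper m α) t ≤ Hrhs m α t (γ * gUpper m α t))
    {a b : ℝ} (ha : 0 < a) (hab : a < b) (hb : b < tHat m α) :
    ∃ f : ℝ → ℝ, f a = γ * gUpper m α a ∧ ContinuousOn f (Icc a b) ∧
      (∀ t ∈ Ioo a b, HasDerivAt f (Hrhs m α t (f t)) t) ∧
      (∀ t ∈ Icc a b, γ * gUpper m α t ≤ f t ∧ f t ≤ gUpper m α t) := by
  have hJ : Icc a b ⊆ Ioo 0 (tHat m α) := Icc_subset_J hm hα ha hb
  have hma := ma_pos hm hα (m := m) (α := α)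
  -- bound on g
  obtain ⟨Mg, hMg⟩ := IsCompact.exists_bound_of_continuousOn isCompact_Icc
    (contOn_gUpper hm hα hJ)
  have hMg0 : 0 ≤ Mg := le_trans (abs_nonneg _) (hMg a ⟨le_refl a, hab.le⟩)
  set M : ℝ := Mg + 1 with hM
  have hM0 : (0:ℝ) ≤ M := by linarith
  have hgM : ∀ t ∈ Icc a b, gUpper m α t ≤ M ∧ -M ≤ gUpper m α t := by
    intro t ht
    have := abs_le.1 (hMg t ht)
    constructor <;> [linarith; linarith]
  -- bound on Efun
  obtain ⟨K, hK0, hK⟩ := exists_K hm hα (a := a) (b := b) ha hb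
  set L₀ : ℝ := ((m:ℝ) + α) * (2 * M) + K * (1 + 3 * M ^ 2) with hL₀
  have hL₀0 : 0 ≤ L₀ := by
    rw [hL₀]
    have h1 : 0 ≤ ((m:ℝ) + α) * (2 * M) := mul_nonneg hma.le (by linarith)
    have h2 : 0 ≤ K * (1 + 3 * M ^ 2) := mul_nonneg hK0 (by positivity)
    linarith
  set C₀ : ℝ := (1 + M ^ 2) * (((m:ℝ) + α) + K * M) with hC₀
  have hC₀0 : 0 ≤ C₀ := by
    rw [hC₀]
    exact mul_nonneg (by positivity) (add_nonneg hma.le (mul_nonneg hK0 hM0))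
  set R : ℝ := C₀ * (b - a) + 1 with hR
  set x₀ : ℝ := γ * gUpper m α a with hx₀
  set F : ℝ → ℝ → ℝ := fun t w => Hrhs m α t (clampTo M w) with hF
  have hclampM : ∀ x : ℝ, |clampTo M x| ≤ M := by
    intro x
    have := clampTo_mem (x := x) hM0
    rw [abs_le]; exact ⟨this.1, this.2⟩
  have hFlip : ∀ t ∈ Icc a b, ∀ x y : ℝ, |F t x - F t y| ≤ L₀ * |x - y| := by
    intro t ht x y
    calc |F t x - F t y| ≤ L₀ * |clampTo M x - clampTo M y| :=
          Hrhs_lip hm hα (hK t ht) (hclampM x) (hclampM y)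
      _ ≤ L₀ * |x - y| := mul_le_mul_of_nonneg_left (clampTo_diff M x y) hL₀0
  have hpl : IsPicardLindelof F (tmin := a) (tmax := b) ⟨a, le_refl a, hab.le⟩ x₀
      R.toNNReal 0 C₀.toNNReal L₀.toNNReal := by
    constructor
    · intro t ht
      apply LipschitzWith.lipschitzOnWith
      apply LipschitzWith.of_dist_le_mul
      intro x y
      rw [Real.dist_eq, Real.dist_eq, Real.coe_toNNReal L₀ hL₀0]
      exact hFlip t ht x y
    · intro x _
      exact contOn_Hrhs_comp hm hα hJ continuousOn_const
    · intro t ht x _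
      rw [Real.coe_toNNReal C₀ hC₀0]
      exact Hrhs_bound hm hα (hK t ht) (hclampM x)
    · have hR0 : 0 ≤ R := by
        rw [hR]
        have := mul_nonneg hC₀0 (sub_nonneg.2 hab.le)
        linarith
      rw [Real.coe_toNNReal C₀ hC₀0, Real.coe_toNNReal R hR0, NNReal.coe_zero, sub_zero]
      show C₀ * max (b - a) (a - a) ≤ R
      rw [sub_self, max_eq_left (sub_nonneg.2 hab.le), hR]
      linarith
  obtain ⟨f, hf0, hfd⟩ : ∃ f : ℝ → ℝ, f a = x₀ ∧
      ∀ t ∈ Icc a b, HasDerivWithinAt f (F t (f t)) (Icc a b) t :=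
    hpl.exists_eq_forall_mem_Icc_hasDerivWithinAt₀
  have hfc : ContinuousOn f (Icc a b) := fun t ht => (hfd t ht).continuousWithinAt
  have hfd' : ∀ t ∈ Ioo a b, HasDerivAt f (F t (f t)) t := fun t ht =>
    (hfd t (Ioo_subset_Icc_self ht)).hasDerivAt (Icc_mem_nhds ht.1 ht.2)
  have hgc : ContinuousOn (gUpper m α) (Icc a b) := contOn_gUpper hm hα hJ
  have hgd : ∀ t ∈ Ioo a b, HasDerivAt (gUpper m α) (deriv (gUpper m α) t) t := fun t ht =>
    (hasDerivAt_gUpper hm hα (hJ (Ioo_subset_Icc_self ht))).differentiableAt.hasDerivAt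
  have hgpos : ∀ t ∈ Icc a b, 0 < gUpper m α t := fun t ht => gUpper_pos hm hα (hJ ht)
  -- clamp is the identity on the relevant ranges
  have hclamp_g : ∀ t ∈ Icc a b, clampTo M (gUpper m α t) = gUpper m α t := by
    intro t ht
    exact clampTo_eq ⟨(hgM t ht).2, (hgM t ht).1⟩
  have hclamp_γg : ∀ t ∈ Icc a b, clampTo M (γ * gUpper m α t) = γ * gUpper m α t := by
    intro t ht
    apply clampTo_eq
    have h1 := hgpos t ht
    have h2 := (hgM t ht).1
    have h3 : γ * gUpper m α t ≤ gUpper m α t := mul_le_of_le_one_left h1.le hγ1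
    have h4 : 0 < γ * gUpper m α t := mul_pos hγ0 h1
    constructor <;> linarith
  -- upper bound  f ≤ g
  have hupper : ∀ t ∈ Icc a b, f t ≤ gUpper m α t := by
    apply ode_comparison (L := L₀) hab.le hfc hgc hfd' hgd
    · intro t ht hle
      have htJ := hJ (Ioo_subset_Icc_self ht)
      have h0 : Hrhs m α t (gUpper m α t) = 0 := Hrhs_g_eq_zero hm hα htJ
      have hlip := hFlip t (Ioo_subset_Icc_self ht) (f t) (gUpper m α t)
      have hFg : F t (gUpper m α t) = 0 := by
        rw [hF]; simp only; rw [hclamp_g t (Ioo_subset_Icc_self ht), h0]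
      have habs : |f t - gUpper m α t| = f t - gUpper m α t := abs_of_nonneg (by linarith)
      have h2 := abs_le.1 hlip
      have hgd0 : 0 ≤ deriv (gUpper m α) t := deriv_gUpper_nonneg hm hα htJ
      rw [habs] at h2
      have h3 : F t (f t) - F t (gUpper m α t) ≤ L₀ * (f t - gUpper m α t) :=
        le_trans (le_abs_self _) (by rw [abs_sub_comm] at hlip ⊢; rwa [habs] at hlip)
      rw [hFg] at h3
      linarith
    · rw [hf0, hx₀]
      exact mul_le_of_le_one_left (hgpos a ⟨le_refl a, hab.le⟩).le hγ1
  -- lower bound γ g ≤ f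
  have hlower : ∀ t ∈ Icc a b, γ * gUpper m α t ≤ f t := by
    apply ode_comparison (L := L₀) hab.le
      (hgc.const_smul γ |>.congr (fun t _ => by simp [smul_eq_mul])) hfc
      (fun t ht => ((hgd t ht).const_mul γ)) hfd'
    · intro t ht hle
      have htJ := hJ (Ioo_subset_Icc_self ht)
      have h1 := hlow t htJ
      have hlip := hFlip t (Ioo_subset_Icc_self ht) (γ * gUpper m α t) (f t)
      have habs : |γ * gUpper m α t - f t| = γ * gUpper m α t - f t :=
        abs_of_nonneg (by linarith)
      rw [habs] at hlip
      have h2 : F t (γ * gUpper m α t) - F t (f t) ≤ L₀ * (γ * gUpper m α t - f t) :=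
        le_trans (le_abs_self _) hlip
      have h3 : F t (γ * gUpper m α t) = Hrhs m α t (γ * gUpper m α t) := by
        rw [hF]; simp only; rw [hclamp_γg t (Ioo_subset_Icc_self ht)]
      rw [h3] at h2
      linarith
    · rw [hf0]
  -- conclude
  refine ⟨f, hf0, hfc, ?_, fun t ht => ⟨hlower t ht, hupper t ht⟩⟩
  intro t ht
  have htI := Ioo_subset_Icc_self ht
  have := hfd' t ht
  have heq : F t (f t) = Hrhs m α t (f t) := by
    rw [hF]; simp only
    congr 1
    apply clampTo_eq
    have h1 := hlower t htI
    have h2 := hupper t htI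
    have h3 := (hgM t htI).1
    have h4 := mul_pos hγ0 (hgpos t htI)
    constructor <;> linarith
  rwa [heq] at this

/-! ### Auxiliary facts for the endpoint limits -/

section Limits

variable {m : ℕ} {α : ℝ} (hm : 2 ≤ m) (hα : 0 < α)
include hm hα

lemma gUpper_tendsto_zero : Tendsto (gUpper m α) (𝓝[>] 0) (𝓝 0) := by
  have hca : ContinuousAt (gUpper m α) 0 := by
    apply ContinuousAt.div (by fun_prop) (by fun_prop)
    simp only [mul_zero, Real.cos_zero, mul_one]
    intro h
    linarith [hα]
  have h0 : gUpper m α 0 = 0 := by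
    unfold gUpper
    simp
  have := hca.tendsto
  rw [h0] at this
  exact this.mono_left nhdsWithin_le_nhds

lemma Dfun_tHat_eq_zero : Dfun m α (tHat m α) = 0 := by
  set s := tHat m α with hs
  have hm1 := m1_pos hm hα
  have hcos : 0 < Real.cos s := Real.cos_arctan_pos _
  have htan : Real.tan s = Real.sqrt (α / ((m:ℝ) - 1)) := Real.tan_arctan _
  have htan2 : Real.tan s ^ 2 = α / ((m:ℝ) - 1) := by
    rw [htan]; exact Real.sq_sqrt (le_of_lt (div_pos hα hm1))
  have hkey : ((m:ℝ) - 1) * Real.sin s ^ 2 = α * Real.cos s ^ 2 := by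
    rw [Real.tan_eq_sin_div_cos, div_pow, div_eq_div_iff (by positivity) (ne_of_gt hm1)] at htan2
    linarith
  have hsc : Real.sin s ^ 2 + Real.cos s ^ 2 = 1 := Real.sin_sq_add_cos_sq s
  unfold Dfun
  rw [Real.cos_two_mul]
  nlinarith

lemma gUpper_tendsto_atTop : Tendsto (gUpper m α) (𝓝[<] (tHat m α)) atTop := by
  have hth := tHat_pos hm hα
  have hth2 := tHat_lt hm hα
  have hgeq : gUpper m α = fun t =>
      (((m:ℝ) + α) * Real.sin (2 * t)) * (Dfun m α t)⁻¹ := by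
    funext t; unfold gUpper Dfun; rw [div_eq_mul_inv]
  rw [hgeq]
  have hsinpos : 0 < Real.sin (2 * tHat m α) := by
    apply Real.sin_pos_of_pos_of_lt_pi (by linarith)
    nlinarith [Real.pi_pos]
  apply Filter.Tendsto.pos_mul_atTop (C := ((m:ℝ) + α) * Real.sin (2 * tHat m α))
    (mul_pos (ma_pos hm hα) hsinpos)
  · exact ((continuous_const.mul (Real.continuous_sin.comp
      (continuous_const.mul continuous_id))).tendsto _).mono_left nhdsWithin_le_nhds
  · apply tendsto_inv_nhdsGT_zero.comp
    rw [tendsto_nhdsWithin_iff]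
    constructor
    · have hc : Continuous (Dfun m α) := by unfold Dfun; fun_prop
      have := (hc.tendsto (tHat m α)).mono_left
        (nhdsWithin_le_nhds (s := Iio (tHat m α)))
      rwa [Dfun_tHat_eq_zero hm hα] at this
    · filter_upwards [Ioo_mem_nhdsLT_of_mem (show tHat m α ∈ Ioc 0 (tHat m α) from
        ⟨hth, le_refl _⟩)] with t ht
      exact Dfun_pos hm hα ht

end Limits

/-! ### The main theorem -/

/-- If `γ ∈ (0, 1 − 1/(m+α))` gives a lower solution `γ g_{m,α}` on `(0, t̂)`, then the ODE
`w' = H_{m,α}(t, w)` has a solution `w` on `(0, t̂)` squeezed between `γ g_{m,α}` and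
`g_{m,α}`, with `w(t) → 0` as `t → 0⁺` and `w(t) → +∞` as `t → t̂⁻`. -/
theorem solution_exists (m : ℕ) (hm : 2 ≤ m) (α : ℝ) (hα : 0 < α)
    (γ : ℝ) (hγ0 : 0 < γ) (hγ1 : γ < 1 - 1 / ((m : ℝ) + α))
    (hlow : ∀ t ∈ Set.Ioo 0 (tHat m α),
      γ * deriv (gUpper m α) t ≤ Hrhs m α t (γ * gUpper m α t)) :
    ∃ w : ℝ → ℝ,
      (∀ t ∈ Set.Ioo 0 (tHat m α), HasDerivAt w (Hrhs m α t (w t)) t) ∧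
      (∀ t ∈ Set.Ioo 0 (tHat m α),
        0 < γ * gUpper m α t ∧ γ * gUpper m α t ≤ w t ∧ w t ≤ gUpper m α t) ∧
      Filter.Tendsto w (nhdsWithin 0 (Set.Ioi 0)) (nhds 0) ∧
      Filter.Tendsto w (nhdsWithin (tHat m α) (Set.Iio (tHat m α))) Filter.atTop := by
  classical
  have hma := ma_pos hm hα (m := m) (α := α)
  have hγ1' : γ ≤ 1 := by
    have h1 : 0 < 1 / ((m:ℝ) + α) := by positivity
    linarith
  have hthpos : 0 < tHat m α := tHat_pos hm hα
  -- the exhausting sequence of compact intervals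
  set τ : ℕ → ℝ := fun n => tHat m α / ((n : ℝ) + 3) with hτdef
  set T : ℕ → ℝ := fun n => tHat m α - tHat m α / ((n : ℝ) + 3) with hTdef
  have hn3 : ∀ n : ℕ, (0:ℝ) < (n:ℝ) + 3 := fun n => by positivity
  have hτpos : ∀ n, 0 < τ n := fun n => div_pos hthpos (hn3 n)
  have hτle : ∀ n, τ n ≤ tHat m α / 3 := by
    intro n
    apply div_le_div_of_nonneg_left hthpos.le (by norm_num)
    have : (0:ℝ) ≤ (n:ℝ) := Nat.cast_nonneg n
    linarith
  have hτT : ∀ n, τ n < T n := by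
    intro n
    have h1 := hτle n
    have h2 := hτpos n
    rw [hTdef]
    simp only
    linarith
  have hTlt : ∀ n, T n < tHat m α := by
    intro n
    have := hτpos n
    rw [hTdef]
    simp only
    linarith
  have hτanti : ∀ n, τ (n+1) ≤ τ n := by
    intro n
    apply div_le_div_of_nonneg_left hthpos.le (hn3 n)
    push_cast
    linarith
  have hTmono : ∀ n, T n ≤ T (n+1) := by
    intro n
    have := hτanti n
    rw [hTdef]
    simp only
    rw [hτdef] at this
    simp only at this
    linarith
  have hIccsub : ∀ n, Icc (τ n) (T n) ⊆ Icc (τ (n+1)) (T (n+1)) :=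
    fun n => Icc_subset_Icc (hτanti n) (hTmono n)
  have hτanti' : Antitone τ := antitone_nat_of_succ_le hτanti
  have hTmono' : Monotone T := monotone_nat_of_le_succ hTmono
  have hIccsub' : ∀ k l, k ≤ l → Icc (τ k) (T k) ⊆ Icc (τ l) (T l) :=
    fun k l hkl => Icc_subset_Icc (hτanti' hkl) (hTmono' hkl)
  have hJn : ∀ n, Icc (τ n) (T n) ⊆ Ioo 0 (tHat m α) :=
    fun n => Icc_subset_J hm hα (hτpos n) (hTlt n)
  -- eventual membership of a fixed point of `J` in the intervals
  have hev : ∀ t ∈ Ioo 0 (tHat m α), ∀ᶠ n in atTop, τ n < t ∧ t < T n := by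
    intro t ht
    set ε := min t (tHat m α - t) with hεdef
    have hε0 : 0 < ε := lt_min ht.1 (by linarith [ht.2])
    obtain ⟨N, hN⟩ := exists_nat_gt (tHat m α / ε)
    rw [eventually_atTop]
    refine ⟨N, fun n hn => ?_⟩
    have h1 : tHat m α / ε < (n:ℝ) + 3 := by
      have : (N:ℝ) ≤ n := Nat.cast_le.2 hn
      linarith
    have h2 : τ n < ε := by
      rw [hτdef]
      simp only
      rw [div_lt_iff₀ (hn3 n)]
      rw [div_lt_iff₀ hε0] at h1
      nlinarith
    constructor
    · calc τ n < ε := h2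
        _ ≤ t := min_le_left _ _
    · have h3 : ε ≤ tHat m α - t := min_le_right _ _
      rw [hTdef]
      simp only
      rw [hτdef] at h2
      simp only at h2
      linarith
  -- the approximating solutions
  have hex : ∀ n, ∃ f : ℝ → ℝ, f (τ n) = γ * gUpper m α (τ n) ∧
      ContinuousOn f (Icc (τ n) (T n)) ∧
      (∀ t ∈ Ioo (τ n) (T n), HasDerivAt f (Hrhs m α t (f t)) t) ∧
      (∀ t ∈ Icc (τ n) (T n), γ * gUpper m α t ≤ f t ∧ f t ≤ gUpper m α t) :=
    fun n => exists_solution_on hm hα hγ0 hγ1' hlow (hτpos n) (hτT n) (hTlt n)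
  choose f hf0 hfcOn hfd hfb using hex
  -- globally continuous modifications
  set fc : ℕ → ℝ → ℝ := fun n t => f n (max (τ n) (min t (T n))) with hfcdef
  have hfc_cont : ∀ n, Continuous (fc n) := by
    intro n
    apply (hfcOn n).comp_continuous (by fun_prop)
    intro x
    exact ⟨le_max_left _ _, max_le (hτT n).le (min_le_right _ _)⟩
  have hfc_eq : ∀ n, ∀ t ∈ Icc (τ n) (T n), fc n t = f n t := by
    intro n t ht
    rw [hfcdef]
    simp only
    rw [min_eq_left ht.2, max_eq_right ht.1]
  -- comparison between consecutive approximations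
  have hstep : ∀ n, ∀ t ∈ Icc (τ n) (T n), f n t ≤ f (n+1) t := by
    intro n
    obtain ⟨K, hK0, hK⟩ := exists_K hm hα (hτpos n) (hTlt n)
    obtain ⟨Mg, hMg⟩ := IsCompact.exists_bound_of_continuousOn isCompact_Icc
      (contOn_gUpper hm hα (hJn n))
    apply ode_comparison (L := ((m:ℝ)+α)*(2*Mg) + K*(1+3*Mg^2)) (hτT n).le
      (hfcOn n) ((hfcOn (n+1)).mono (hIccsub n)) (hfd n)
      (fun t ht => hfd (n+1) t ⟨lt_of_le_of_lt (hτanti n) ht.1,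
        lt_of_lt_of_le ht.2 (hTmono n)⟩)
    · intro t ht hle
      have htI : t ∈ Icc (τ n) (T n) := Ioo_subset_Icc_self ht
      have hb1 := hfb n t htI
      have hb2 := hfb (n+1) t (hIccsub n htI)
      have hgpos := gUpper_pos hm hα (hJn n htI)
      have hgM := abs_le.1 (hMg t htI)
      have hγg : 0 < γ * gUpper m α t := mul_pos hγ0 hgpos
      have habs1 : |f n t| ≤ Mg := by
        rw [abs_le]; constructor <;> linarith [hb1.1, hb1.2]
      have habs2 : |f (n+1) t| ≤ Mg := by
        rw [abs_le]; constructor <;> linarith [hb2.1, hb2.2]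
      have hlip := Hrhs_lip hm hα (hK t htI) habs1 habs2
      have habs : |f n t - f (n+1) t| = f n t - f (n+1) t := abs_of_nonneg (by linarith)
      rw [habs] at hlip
      have h2 := le_trans (le_abs_self _) hlip
      linarith
    · rw [hf0 n]
      exact (hfb (n+1) (τ n) (hIccsub n ⟨le_refl _, (hτT n).le⟩)).1
  -- the monotone approximating sequence, extended by the subsolution
  set aux : ℕ → ℝ → ℝ := fun n t =>
    if t ∈ Icc (τ n) (T n) then fc n t else γ * gUpper m α t with hauxdef
  have hauxb : ∀ n, ∀ t ∈ Ioo 0 (tHat m α),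
      γ * gUpper m α t ≤ aux n t ∧ aux n t ≤ gUpper m α t := by
    intro n t ht
    rw [hauxdef]
    simp only
    split_ifs with h
    · rw [hfc_eq n t h]; exact hfb n t h
    · exact ⟨le_refl _, mul_le_of_le_one_left (gUpper_pos hm hα ht).le hγ1'⟩
  have hauxmono : ∀ t ∈ Ioo 0 (tHat m α), Monotone fun n => aux n t := by
    intro t ht
    apply monotone_nat_of_le_succ
    intro n
    by_cases h1 : t ∈ Icc (τ n) (T n)
    · have h2 : t ∈ Icc (τ (n+1)) (T (n+1)) := hIccsub n h1
      rw [hauxdef]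
      simp only
      rw [if_pos h1, if_pos h2, hfc_eq n t h1, hfc_eq _ t h2]
      exact hstep n t h1
    · rw [hauxdef]
      simp only
      rw [if_neg h1]
      split_ifs with h2
      · rw [hfc_eq _ t h2]; exact (hfb (n+1) t h2).1
      · exact le_refl _
  have hbdd : ∀ t ∈ Ioo 0 (tHat m α), BddAbove (range fun n => aux n t) := by
    intro t ht
    refine ⟨gUpper m α t, ?_⟩
    rintro x ⟨n, rfl⟩
    exact (hauxb n t ht).2
  set w : ℝ → ℝ := fun t => ⨆ n, aux n t with hwdef
  have hwlim : ∀ t ∈ Ioo 0 (tHat m α), Tendsto (fun n => aux n t) atTop (𝓝 (w t)) :=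
    fun t ht => tendsto_atTop_ciSup (hauxmono t ht) (hbdd t ht)
  have hwb : ∀ t ∈ Ioo 0 (tHat m α), γ * gUpper m α t ≤ w t ∧ w t ≤ gUpper m α t := by
    intro t ht
    constructor
    · exact le_trans (hauxb 0 t ht).1 (le_ciSup (hbdd t ht) 0)
    · exact ciSup_le fun n => (hauxb n t ht).2
  have hflim : ∀ t ∈ Ioo 0 (tHat m α), Tendsto (fun n => f n t) atTop (𝓝 (w t)) := by
    intro t ht
    apply (hwlim t ht).congr'
    filter_upwards [hev t ht] with n hn
    have h1 : t ∈ Icc (τ n) (T n) := ⟨hn.1.le, hn.2.le⟩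
    rw [hauxdef]
    simp only
    rw [if_pos h1, hfc_eq n t h1]
  -- measurability
  have hgmeas : Measurable (gUpper m α) := by
    unfold gUpper
    apply Measurable.div
    · exact (continuous_const.mul (Real.continuous_sin.comp
        (continuous_const.mul continuous_id))).measurable
    · exact ((continuous_const.mul (Real.continuous_cos.comp
        (continuous_const.mul continuous_id))).sub continuous_const).measurable
  have hauxmeas : ∀ n, Measurable (aux n) := by
    intro n
    rw [hauxdef]
    exact Measurable.ite measurableSet_Icc (hfc_cont n).measurable
      (measurable_const.mul hgmeas)
  have hEmeas : Measurable (Efun m α) := by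
    unfold Efun
    apply Measurable.div
    · exact ((continuous_const.sub (continuous_const.mul (Real.continuous_cos.comp
        (continuous_const.mul continuous_id)))).measurable)
    · exact (Real.continuous_sin.comp (continuous_const.mul continuous_id)).measurable
  have hwmeas : ∀ {a b : ℝ}, Icc a b ⊆ Ioo 0 (tHat m α) →
      AEStronglyMeasurable w (volume.restrict (Icc a b)) := by
    intro a b hsub
    apply aestronglyMeasurable_of_tendsto_ae atTop
      (fun n => ((hauxmeas n).aestronglyMeasurable))
    rw [ae_restrict_iff' measurableSet_Icc]
    exact ae_of_all _ fun s hs => hwlim s (hsub hs)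
  have hφmeas : ∀ {a b : ℝ}, Icc a b ⊆ Ioo 0 (tHat m α) →
      AEStronglyMeasurable (fun s => Hrhs m α s (w s)) (volume.restrict (Icc a b)) := by
    intro a b hsub
    have hw := hwmeas hsub
    have heq : (fun s => Hrhs m α s (w s))
        = fun s => (1 + w s * w s) * (((m:ℝ) + α) + Efun m α s * w s) := by
      funext s; rw [Hrhs_eq]; ring
    rw [heq]
    exact (aestronglyMeasurable_const.add (hw.mul hw)).mul
      (aestronglyMeasurable_const.add (hEmeas.aestronglyMeasurable.mul hw))
  -- uniform bounds on compacts
  have hCbound : ∀ {a b : ℝ}, 0 < a → a ≤ b → b < tHat m α →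
      ∃ C : ℝ, ∀ s ∈ Icc a b, |Hrhs m α s (w s)| ≤ C ∧ (∀ n, |Hrhs m α s (f n s)| ≤ C ∨
        ¬ (τ n < a ∧ b < T n)) := by
    intro a b ha hab hb
    have hsub : Icc a b ⊆ Ioo 0 (tHat m α) := Icc_subset_J hm hα ha hb
    obtain ⟨K, hK0, hK⟩ := exists_K hm hα ha hb
    obtain ⟨Mg, hMg⟩ := IsCompact.exists_bound_of_continuousOn isCompact_Icc
      (contOn_gUpper hm hα hsub)
    have habsM : ∀ s ∈ Icc a b, ∀ x : ℝ, γ * gUpper m α s ≤ x → x ≤ gUpper m α s →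
        |x| ≤ Mg := by
      intro s hs x h1 h2
      have hg := gUpper_pos hm hα (hsub hs)
      have h3 := abs_le.1 (hMg s hs)
      have h4 := mul_pos hγ0 hg
      rw [abs_le]; constructor <;> linarith
    refine ⟨(1 + Mg^2) * (((m:ℝ) + α) + K * Mg), fun s hs => ⟨?_, fun n => ?_⟩⟩
    · exact Hrhs_bound hm hα (hK s hs)
        (habsM s hs _ ((hwb s (hsub hs)).1) ((hwb s (hsub hs)).2))
    · by_cases hn : τ n < a ∧ b < T n
      · left
        have hsn : s ∈ Icc (τ n) (T n) :=
          ⟨le_trans hn.1.le hs.1, le_trans hs.2 hn.2.le⟩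
        have hbnd := hfb n s hsn
        exact Hrhs_bound hm hα (hK s hs) (habsM s hs _ hbnd.1 hbnd.2)
      · right; exact hn
  -- the base point
  set t₀ : ℝ := tHat m α / 2 with ht₀def
  have ht₀J : t₀ ∈ Ioo 0 (tHat m α) := ⟨half_pos hthpos, by rw [ht₀def]; linarith⟩
  -- the integral equation for w
  have hinteq : ∀ t ∈ Ioo 0 (tHat m α),
      w t - w t₀ = ∫ s in t₀..t, Hrhs m α s (w s) := by
    intro t ht
    set a' := min t₀ t with ha'def
    set b' := max t₀ t with hb'def
    have ha'0 : 0 < a' := lt_min ht₀J.1 ht.1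
    have hb' : b' < tHat m α := max_lt ht₀J.2 ht.2
    have ha'b' : a' ≤ b' := min_le_max
    have hsubJ : Icc a' b' ⊆ Ioo 0 (tHat m α) := Icc_subset_J hm hα ha'0 hb'
    have huIcc : uIcc t₀ t = Icc a' b' := rfl
    have huIoc : uIoc t₀ t ⊆ Icc a' b' := Ioc_subset_Icc_self
    obtain ⟨C, hC⟩ := hCbound ha'0 ha'b' hb'
    have hFTC : ∀ᶠ n in atTop, f n t - f n t₀ = ∫ s in t₀..t, Hrhs m α s (f n s) := by
      filter_upwards [hev t ht, hev t₀ ht₀J] with n hn hn0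
      have hIccsub2 : Icc a' b' ⊆ Ioo (τ n) (T n) := by
        intro s hs
        exact ⟨lt_of_lt_of_le (lt_min hn0.1 hn.1) hs.1,
          lt_of_le_of_lt hs.2 (max_lt hn0.2 hn.2)⟩
      symm
      apply intervalIntegral.integral_eq_sub_of_hasDerivAt
      · intro s hs
        exact hfd n s (hIccsub2 (huIcc ▸ hs))
      · apply ContinuousOn.intervalIntegrable
        rw [huIcc]
        exact contOn_Hrhs_comp hm hα hsubJ
          ((hfcOn n).mono fun s hs => Ioo_subset_Icc_self (hIccsub2 hs))
    have hL : Tendsto (fun n => f n t - f n t₀) atTop (𝓝 (w t - w t₀)) :=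
      (hflim t ht).sub (hflim t₀ ht₀J)
    have hR : Tendsto (fun n => ∫ s in t₀..t, Hrhs m α s (f n s)) atTop
        (𝓝 (∫ s in t₀..t, Hrhs m α s (w s))) := by
      apply intervalIntegral.tendsto_integral_filter_of_dominated_convergence
        (bound := fun _ => C)
      · filter_upwards [hev t ht, hev t₀ ht₀J] with n hn hn0
        have hIccsub2 : Icc a' b' ⊆ Icc (τ n) (T n) := by
          intro s hs
          exact ⟨le_trans (lt_min hn0.1 hn.1).le hs.1,
            le_trans hs.2 (max_lt hn0.2 hn.2).le⟩
        exact ((contOn_Hrhs_comp hm hα hsubJ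
          ((hfcOn n).mono hIccsub2)).mono huIoc).aestronglyMeasurable measurableSet_uIoc
      · filter_upwards [hev t ht, hev t₀ ht₀J] with n hn hn0
        apply ae_of_all
        intro s hs
        have hsIcc : s ∈ Icc a' b' := huIoc hs
        rcases (hC s hsIcc).2 n with h | h
        · rwa [Real.norm_eq_abs]
        · exact absurd ⟨lt_min hn0.1 hn.1, max_lt hn0.2 hn.2⟩ h
      · exact intervalIntegrable_const
      · apply ae_of_all
        intro s hs
        have hsJ := hsubJ (huIoc hs)
        have hcont : Continuous fun y : ℝ => Hrhs m α s y := by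
          have heq : (fun y : ℝ => Hrhs m α s y)
              = fun y => (1 + y ^ 2) * (((m:ℝ) + α) + Efun m α s * y) := by
            funext y; rw [Hrhs_eq]
          rw [heq]; fun_prop
        exact (hcont.tendsto (w s)).comp (hflim s hsJ)
    exact tendsto_nhds_unique hL (hR.congr' (by filter_upwards [hFTC] with n h using h.symm))
  -- integrability of the right-hand side composed with w
  have hφint : ∀ {a b : ℝ}, 0 < a → a ≤ b → b < tHat m α →
      IntegrableOn (fun s => Hrhs m α s (w s)) (Icc a b) := by
    intro a b ha hab hb
    have hsub : Icc a b ⊆ Ioo 0 (tHat m α) := Icc_subset_J hm hα ha hb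
    obtain ⟨C, hC⟩ := hCbound ha hab hb
    apply MeasureTheory.Integrable.mono' (g := fun _ => C)
      (integrableOn_const (s := Icc a b) (μ := volume) (C := C) measure_Icc_lt_top.ne)
      (hφmeas hsub)
    rw [ae_restrict_iff' measurableSet_Icc]
    exact ae_of_all _ fun s hs => by rw [Real.norm_eq_abs]; exact (hC s hs).1
  -- w satisfies the ODE
  have hderiv : ∀ t ∈ Ioo 0 (tHat m α), HasDerivAt w (Hrhs m α t (w t)) t := by
    intro t ht
    set a' := t / 2 with ha'def
    set b' := (t + tHat m α) / 2 with hb'def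
    have ha'0 : 0 < a' := half_pos ht.1
    have ha't : a' < t := by rw [ha'def]; linarith [ht.1]
    have htb' : t < b' := by rw [hb'def]; linarith [ht.2]
    have hb'th : b' < tHat m α := by rw [hb'def]; linarith [ht.2]
    have ha'b' : a' ≤ b' := by linarith
    have hsub : Icc a' b' ⊆ Ioo 0 (tHat m α) := Icc_subset_J hm hα ha'0 hb'th
    have ha'J : a' ∈ Ioo 0 (tHat m α) := hsub ⟨le_refl _, ha'b'⟩
    -- big interval containing a', b', t₀
    set A := min a' t₀ with hAdef
    set B := max b' t₀ with hBdef
    have hA0 : 0 < A := lt_min ha'0 ht₀J.1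
    have hBth : B < tHat m α := max_lt hb'th ht₀J.2
    have hAB : A ≤ B := le_trans (min_le_left _ _) (le_trans ha'b' (le_max_left _ _))
    have hintAB := hφint hA0 hAB hBth
    have hii : ∀ u ∈ Icc a' b', IntervalIntegrable (fun s => Hrhs m α s (w s)) volume t₀ u := by
      intro u hu
      rw [intervalIntegrable_iff]
      apply hintAB.mono_set
      refine Ioc_subset_Icc_self.trans (Icc_subset_Icc ?_ ?_)
      · exact le_min (min_le_right _ _) (le_trans (min_le_left _ _) hu.1)
      · exact max_le (le_max_right _ _) (le_trans hu.2 (le_max_left _ _))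
    have hww : ∀ u ∈ Icc a' b', w u = w a' + ∫ s in a'..u, Hrhs m α s (w s) := by
      intro u hu
      have h1 := hinteq u (hsub hu)
      have h2 := hinteq a' ha'J
      have h3 := intervalIntegral.integral_interval_sub_left (hii u hu)
        (hii a' ⟨le_refl _, ha'b'⟩)
      linarith [h3]
    -- continuity of w at t
    have hiiab : IntervalIntegrable (fun s => Hrhs m α s (w s)) volume a' b' := by
      rw [intervalIntegrable_iff, uIoc_of_le ha'b']
      exact (hφint ha'0 ha'b' hb'th).mono_set Ioc_subset_Icc_self
    have huIccab : uIcc a' b' = Icc a' b' := uIcc_of_le ha'b'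
    have hprimcont : ContinuousOn (fun u => ∫ s in a'..u, Hrhs m α s (w s)) (Icc a' b') := by
      have := intervalIntegral.continuousOn_primitive_interval' hiiab
        (by rw [huIccab]; exact ⟨le_refl _, ha'b'⟩)
      rwa [huIccab] at this
    have hwcont : ContinuousAt w t := by
      have hcont2 : ContinuousAt (fun u => w a' + ∫ s in a'..u, Hrhs m α s (w s)) t := by
        apply ContinuousAt.add continuousAt_const
        exact (hprimcont.continuousAt (Icc_mem_nhds ha't htb'))
      apply hcont2.congr
      filter_upwards [Ioo_mem_nhds ha't htb'] with u hu
      exact (hww u (Ioo_subset_Icc_self hu)).symm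
    -- continuity of the integrand at t
    have hφcont : ContinuousAt (fun s => Hrhs m α s (w s)) t := by
      have heq : (fun s => Hrhs m α s (w s))
          = fun s => (1 + w s ^ 2) * (((m:ℝ) + α) + Efun m α s * w s) := by
        funext s; rw [Hrhs_eq]
      rw [heq]
      have hEcont : ContinuousAt (Efun m α) t :=
        (contOn_Efun hm hα (subset_refl _)).continuousAt (isOpen_Ioo.mem_nhds ht)
      exact (continuousAt_const.add ((hwcont.pow 2))).mul
        (continuousAt_const.add (hEcont.mul hwcont))
    have hmeasf : StronglyMeasurableAtFilter (fun s => Hrhs m α s (w s)) (𝓝 t) volume := by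
      refine ⟨Icc a' b', Icc_mem_nhds ha't htb', hφmeas hsub⟩
    have hprim : HasDerivAt (fun u => ∫ s in a'..u, Hrhs m α s (w s))
        (Hrhs m α t (w t)) t := by
      apply intervalIntegral.integral_hasDerivAt_right _ hmeasf hφcont
      rw [intervalIntegrable_iff]
      apply (hφint ha'0 ha'b' hb'th).mono_set
      refine Ioc_subset_Icc_self.trans (Icc_subset_Icc ?_ ?_)
      · exact le_min (le_refl _) ha't.le
      · exact max_le ha'b' htb'.le
    have hEq : w =ᶠ[𝓝 t] fun u => w a' + ∫ s in a'..u, Hrhs m α s (w s) := by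
      filter_upwards [Ioo_mem_nhds ha't htb'] with u hu
      exact hww u (Ioo_subset_Icc_self hu)
    exact ((hprim.const_add (w a')).congr_of_eventuallyEq hEq).congr_deriv rfl
  -- endpoint limits
  have hlim0 : Tendsto w (𝓝[>] 0) (𝓝 0) := by
    have hg0 := gUpper_tendsto_zero hm hα
    have hγg0 : Tendsto (fun t => γ * gUpper m α t) (𝓝[>] 0) (𝓝 0) := by
      have := hg0.const_mul γ
      rwa [mul_zero] at this
    apply tendsto_of_tendsto_of_tendsto_of_le_of_le' hγg0 hg0
    · filter_upwards [Ioo_mem_nhdsGT_of_mem (show (0:ℝ) ∈ Ico 0 (tHat m α) from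
        ⟨le_refl _, hthpos⟩)] with t ht
      exact (hwb t ht).1
    · filter_upwards [Ioo_mem_nhdsGT_of_mem (show (0:ℝ) ∈ Ico 0 (tHat m α) from
        ⟨le_refl _, hthpos⟩)] with t ht
      exact (hwb t ht).2
  have hlimTop : Tendsto w (𝓝[<] (tHat m α)) atTop := by
    have hgtop := gUpper_tendsto_atTop hm hα
    apply tendsto_atTop_mono' _ _ (Tendsto.const_mul_atTop hγ0 hgtop)
    filter_upwards [Ioo_mem_nhdsLT_of_mem (show tHat m α ∈ Ioc 0 (tHat m α) from
      ⟨hthpos, le_refl _⟩)] with t ht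
    exact (hwb t ht).1
  exact ⟨w, hderiv, fun t ht => ⟨mul_pos hγ0 (gUpper_pos hm hα ht),
    (hwb t ht).1, (hwb t ht).2⟩, hlim0, hlimTop⟩
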